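/- In the arrow category of abelian groups with diagonal homotopies, dually: if f = (f', f'') : A → B has f'' an isomorphism and f is a homotopy equivalence witnessed by an adjoint equivalence (g, α, β) with the other triangle identity α∘g + g∘β = 0, then g' − α∂_B is a two-sided inverse of f'; hence f is an isomorphism. -/
import Mathlib


/-- Dual of Lemma 4.2 in the arrow category `Ab²`: if `f = (f', f'')` has
`f'' = 1` (so `A'' = B'' = Z`) and `f` is a homotopy equivalence witnessed by an
adjoint equivalence `(g, α : 1 ≃ gf, β : fg ≃ 1)` with the triangle identity
`α∘g + g∘β = 0`, then `g' - α∂_B` is a two-sided inverse of `f'`; hence `f` is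
an isomorphism. -/
theorem stmt15 {A' B' Z : Type*}
    [AddCommGroup A'] [AddCommGroup B'] [AddCommGroup Z]
    (dA : A' →+ Z) (dB : B' →+ Z) (f' : A' →+ B')
    (hsq : ∀ a : A', dB (f' a) = dA a)
    (g' : B' →+ A') (g'' : Z →+ Z)
    (hgsq : ∀ b : B', g'' (dB b) = dA (g' b))
    (α : Z →+ A')
    (hα1 : ∀ a : A', g' (f' a) - a = α (dA a))
    (hα2 : ∀ z : Z, g'' z - z = dA (α z))
    (β : Z →+ B')
    (hβ1 : ∀ b : B', b - f' (g' b) = β (dB b))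
    (hβ2 : ∀ z : Z, z - g'' z = dB (β z))
    (htri : ∀ z : Z, α (g'' z) + g' (β z) = 0) :
    Function.Bijective f' ∧
      (∀ b : B', f' (g' b - α (dB b)) = b) ∧
      (∀ a : A', g' (f' a) - α (dB (f' a)) = a) := by
  have key : ∀ z : Z, f' (α z) = -β z := by
    intro z
    have h1 : g' (f' (α z)) = α (g'' z) := by
      have h := hα1 (α z)
      rw [← hα2 z, map_sub] at h
      exact sub_left_inj.mp h
    have hf : f' (g' (β z)) = β (g'' z) := by
      have h := hβ1 (β z)
      rw [← hβ2 z, map_sub] at h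
      exact sub_right_injective h
    have h2 : f' (α z) - f' (g' (f' (α z))) = β (g'' z) - β z := by
      have h := hβ1 (f' (α z))
      rw [hsq, ← hα2 z, map_sub] at h
      exact h
    calc f' (α z) = (β (g'' z) - β z) + f' (g' (f' (α z))) := sub_eq_iff_eq_add.mp h2
      _ = (β (g'' z) - β z) + f' (α (g'' z)) := by rw [h1]
      _ = (β (g'' z) - β z) + f' (-g' (β z)) := by
            rw [eq_neg_of_add_eq_zero_left (htri z)]
      _ = (β (g'' z) - β z) - f' (g' (β z)) := by rw [map_neg]; abel
      _ = (β (g'' z) - β z) - β (g'' z) := by rw [hf]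
      _ = -β z := by abel
  have right : ∀ b : B', f' (g' b - α (dB b)) = b := by
    intro b
    rw [map_sub, key, ← hβ1 b]
    abel
  have left : ∀ a : A', g' (f' a) - α (dB (f' a)) = a := by
    intro a
    rw [hsq a, ← hα1 a]
    abel
  refine ⟨⟨?_, ?_⟩, right, left⟩
  · intro x y h
    have := left x
    rw [h, left y] at this
    exact this.symm
  · intro b
    exact ⟨g' b - α (dB b), right b⟩
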